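/- Let K₀ be a real symmetric d×d matrix with Tr(K₀) = 0. Then there exist a real symmetric d×d matrix A and a real antisymmetric d×d matrix J such that K₀ = A·J − J·A. -/

import Mathlib

open Matrix

private lemma aux_comm_of_B {d : ℕ} (K B : Matrix (Fin d) (Fin d) ℝ)
    (hB : (1/2 : ℝ) • (Bᵀ * B - B * Bᵀ) = K) :
    ∃ (A J : Matrix (Fin d) (Fin d) ℝ), Aᵀ = A ∧ Jᵀ = -J ∧ K = A * J - J * A := by
  refine ⟨(1/2 : ℝ) • (B + Bᵀ), (1/2 : ℝ) • (B - Bᵀ), ?_, ?_, ?_⟩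
  · rw [transpose_smul, transpose_add, transpose_transpose, add_comm]
  · rw [transpose_smul, transpose_sub, transpose_transpose, ← smul_neg, neg_sub]
  · have h4 : ((1/2:ℝ) • (B + Bᵀ)) * ((1/2:ℝ) • (B - Bᵀ))
        - ((1/2:ℝ) • (B - Bᵀ)) * ((1/2:ℝ) • (B + Bᵀ))
        = (1/4 : ℝ) • ((B + Bᵀ) * (B - Bᵀ) - (B - Bᵀ) * (B + Bᵀ)) := by
      rw [Matrix.smul_mul, Matrix.mul_smul, Matrix.smul_mul, Matrix.mul_smul,
        smul_smul, smul_smul, ← smul_sub]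
      norm_num
    have h5 : (B + Bᵀ) * (B - Bᵀ) - (B - Bᵀ) * (B + Bᵀ)
        = (Bᵀ * B - B * Bᵀ) + (Bᵀ * B - B * Bᵀ) := by
      noncomm_ring
    rw [← hB, h4, h5, smul_add, ← add_smul]
    norm_num

private lemma aux_diag_monotone {d : ℕ} (v : Fin d → ℝ) (hmono : Monotone v)
    (hsum : ∑ i, v i = 0) :
    ∃ B : Matrix (Fin d) (Fin d) ℝ,
      (1/2 : ℝ) • (Bᵀ * B - B * Bᵀ) = Matrix.diagonal v := by
  classical
  set vext : ℕ → ℝ := fun n => if h : n < d then v ⟨n, h⟩ else 0 with hvext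
  set t : ℕ → ℝ := fun n => ∑ k ∈ Finset.range n, vext k with ht
  have hvv : ∀ (k : ℕ) (hk : k < d), vext k = v ⟨k, hk⟩ := by
    intro k hk; simp [hvext, hk]
  have htd : ∀ n, d ≤ n → t n = 0 := by
    intro n hn
    have h1 : ∑ k ∈ Finset.range n, vext k = ∑ k ∈ Finset.range d, vext k := by
      refine (Finset.sum_subset (Finset.range_subset_range.2 hn) ?_).symm
      intro k _ hk
      simp only [Finset.mem_range, not_lt] at hk
      simp [hvext, Nat.not_lt.2 hk]
    have h2 : ∑ k ∈ Finset.range d, vext k = ∑ i : Fin d, v i := by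
      rw [← Fin.sum_univ_eq_sum_range]
      exact Finset.sum_congr rfl fun i _ => by simp [hvext, i.isLt]
    simp [ht, h1, h2, hsum]
  have htle : ∀ n, t n ≤ 0 := by
    intro n
    rcases le_or_gt d n with hn | hn
    · exact le_of_eq (htd n hn)
    · match n with
      | 0 => simp [ht]
      | (m+1) =>
        have hmd : m < d := Nat.lt_of_succ_lt hn
        by_cases hvm : v ⟨m, hmd⟩ ≤ 0
        · apply Finset.sum_nonpos
          intro k hk
          have hk' : k < m + 1 := Finset.mem_range.mp hk
          have hkd : k < d := by omega
          exact le_trans (by rw [hvv k hkd]; exact hmono (Fin.mk_le_mk.mpr (Nat.lt_succ_iff.mp hk'))) hvm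
        · push_neg at hvm
          have hsplit : t (m+1) + ∑ k ∈ Finset.Ico (m+1) d, vext k = t d := by
            rw [ht]
            simp only [Finset.range_eq_Ico]
            exact Finset.sum_Ico_consecutive _ (Nat.zero_le _) (le_of_lt hn)
          have hnn : 0 ≤ ∑ k ∈ Finset.Ico (m+1) d, vext k := by
            apply Finset.sum_nonneg
            intro k hk
            obtain ⟨hk1, hk2⟩ := Finset.mem_Ico.mp hk
            rw [hvv k hk2]
            exact le_of_lt (lt_of_lt_of_le hvm (hmono (Fin.mk_le_mk.mpr (Nat.le_of_succ_le hk1))))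
          have := htd d le_rfl
          linarith [hsplit, hnn]
  set β : ℕ → ℝ := fun n => Real.sqrt (-(2 * t (n+1))) with hβdef
  have hβ : ∀ n, β n * β n = -(2 * t (n+1)) := by
    intro n
    exact Real.mul_self_sqrt (by linarith [htle (n+1)])
  set B : Matrix (Fin d) (Fin d) ℝ :=
    Matrix.of (fun i j : Fin d => if (i:ℕ) + 1 = (j:ℕ) then β i else 0) with hBdef
  have h1 : ∀ i j : Fin d, (Bᵀ * B) i j = if i = j then -(2 * t (i:ℕ)) else 0 := by
    intro i j
    rw [Matrix.mul_apply]
    simp only [hBdef, transpose_apply, of_apply]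
    by_cases hij : i = j
    · subst hij
      rw [if_pos rfl]
      by_cases hi : (i:ℕ) = 0
      · rw [hi]
        have h0 : t 0 = 0 := by simp [ht]
        rw [h0]
        rw [Finset.sum_eq_zero]
        · ring
        · intro k _
          rw [if_neg (by omega), zero_mul]
      · obtain ⟨m, hm⟩ : ∃ m, (i:ℕ) = m + 1 := ⟨(i:ℕ) - 1, by omega⟩
        have hmd : m < d := by have := i.isLt; omega
        rw [Finset.sum_eq_single (⟨m, hmd⟩ : Fin d)]
        · have hcond : ((⟨m, hmd⟩ : Fin d) : ℕ) + 1 = (i:ℕ) := by simp [hm]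
          rw [if_pos hcond, hβ, hm]
        · intro k _ hk
          have : ¬((k:ℕ) + 1 = (i:ℕ)) := by
            intro h
            exact hk (Fin.ext (by simp only [Fin.val_mk]; omega))
          rw [if_neg this, zero_mul]
        · intro h
          exact absurd (Finset.mem_univ _) h
    · rw [if_neg hij]
      apply Finset.sum_eq_zero
      intro k _
      by_cases h1 : (k:ℕ) + 1 = (i:ℕ)
      · have : ¬((k:ℕ) + 1 = (j:ℕ)) := by
          intro h
          exact hij (Fin.ext (by omega))
        rw [if_neg this, mul_zero]
      · rw [if_neg h1, zero_mul]
  have h2 : ∀ i j : Fin d, (B * Bᵀ) i j = if i = j then -(2 * t ((i:ℕ) + 1)) else 0 := by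
    intro i j
    rw [Matrix.mul_apply]
    simp only [hBdef, transpose_apply, of_apply]
    by_cases hij : i = j
    · subst hij
      rw [if_pos rfl]
      by_cases hi : (i:ℕ) + 1 < d
      · rw [Finset.sum_eq_single (⟨(i:ℕ) + 1, hi⟩ : Fin d)]
        · rw [if_pos rfl, hβ]
        · intro k _ hk
          have : ¬((i:ℕ) + 1 = (k:ℕ)) := by
            intro h
            exact hk (Fin.ext (by simp only [Fin.val_mk]; omega))
          rw [if_neg this, zero_mul]
        · intro h
          exact absurd (Finset.mem_univ _) h
      · have hid : (i:ℕ) + 1 = d := by have := i.isLt; omega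
        rw [htd ((i:ℕ)+1) (le_of_eq hid.symm)]
        rw [Finset.sum_eq_zero]
        · ring
        · intro k _
          have : ¬((i:ℕ) + 1 = (k:ℕ)) := by have := k.isLt; omega
          rw [if_neg this, zero_mul]
    · rw [if_neg hij]
      apply Finset.sum_eq_zero
      intro k _
      by_cases h1 : (i:ℕ) + 1 = (k:ℕ)
      · have : ¬((j:ℕ) + 1 = (k:ℕ)) := by
          intro h
          exact hij (Fin.ext (by omega))
        rw [if_neg this, mul_zero]
      · rw [if_neg h1, zero_mul]
  refine ⟨B, ?_⟩
  ext i j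
  rw [Matrix.smul_apply, Matrix.sub_apply, h1, h2, Matrix.diagonal_apply]
  by_cases hij : i = j
  · subst hij
    simp only [if_pos rfl, eq_self_iff_true, if_true, smul_eq_mul]
    have hstep : t ((i:ℕ) + 1) = t (i:ℕ) + v i := by
      have h' := Finset.sum_range_succ vext (i:ℕ)
      rw [hvv (i:ℕ) i.isLt, Fin.eta] at h'
      exact h'
    linarith
  · simp only [if_neg hij, sub_zero, smul_zero]

private lemma aux_diag {d : ℕ} (v : Fin d → ℝ) (hsum : ∑ i, v i = 0) :
    ∃ B : Matrix (Fin d) (Fin d) ℝ,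
      (1/2 : ℝ) • (Bᵀ * B - B * Bᵀ) = Matrix.diagonal v := by
  classical
  set e := Tuple.sort v with he
  obtain ⟨B, hB⟩ := aux_diag_monotone (v ∘ e) (Tuple.monotone_sort v)
    (by rw [show ∑ i, (v ∘ e) i = ∑ i, v i from Equiv.sum_comp e v]; exact hsum)
  refine ⟨B.submatrix e.symm e.symm, ?_⟩
  rw [transpose_submatrix, submatrix_mul_equiv, submatrix_mul_equiv]
  have hrfl : (1/2 : ℝ) • ((Bᵀ * B).submatrix e.symm e.symm - (B * Bᵀ).submatrix e.symm e.symm)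
      = ((1/2 : ℝ) • (Bᵀ * B - B * Bᵀ)).submatrix e.symm e.symm := rfl
  rw [hrfl, hB, submatrix_diagonal_equiv]
  have hcomp : (v ∘ ⇑e) ∘ ⇑e.symm = v := by
    funext x
    simp [Function.comp, Equiv.apply_symm_apply]
  rw [hcomp]

/-- Lemma 4.12(a) (zero variance limit for purely quadratic observables): every
real symmetric traceless matrix `K₀` is a commutator `K₀ = A J - J A` with `A`
symmetric and `J` antisymmetric. -/
theorem stmt18 {d : ℕ} (K₀ : Matrix (Fin d) (Fin d) ℝ) (hK : K₀ᵀ = K₀)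
    (htr : K₀.trace = 0) :
    ∃ (A J : Matrix (Fin d) (Fin d) ℝ), Aᵀ = A ∧ Jᵀ = -J ∧ K₀ = A * J - J * A := by
  classical
  have hHerm : K₀.IsHermitian := by
    rw [Matrix.IsHermitian, Matrix.conjTranspose_eq_transpose_of_trivial, hK]
  set U : Matrix (Fin d) (Fin d) ℝ := (hHerm.eigenvectorUnitary : Matrix (Fin d) (Fin d) ℝ)
    with hUdef
  have hU1 : Uᵀ * U = 1 := by
    have := Matrix.mem_unitaryGroup_iff'.mp hHerm.eigenvectorUnitary.2
    rwa [Matrix.star_eq_conjTranspose, Matrix.conjTranspose_eq_transpose_of_trivial] at this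
  have hU2 : U * Uᵀ = 1 := by
    have := Matrix.mem_unitaryGroup_iff.mp hHerm.eigenvectorUnitary.2
    rwa [Matrix.star_eq_conjTranspose, Matrix.conjTranspose_eq_transpose_of_trivial] at this
  have hspec : K₀ = U * Matrix.diagonal hHerm.eigenvalues * Uᵀ := by
    have h := hHerm.spectral_theorem
    have hof : (RCLike.ofReal ∘ hHerm.eigenvalues : Fin d → ℝ) = hHerm.eigenvalues := by
      funext i; simp
    rw [hof, Unitary.conjStarAlgAut_apply, Matrix.star_eq_conjTranspose, Matrix.conjTranspose_eq_transpose_of_trivial] at h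
    exact h
  have hsum : ∑ i, hHerm.eigenvalues i = 0 := by
    have h := congrArg Matrix.trace hspec
    rw [Matrix.trace_mul_cycle, hU1, Matrix.one_mul, Matrix.trace_diagonal, htr] at h
    exact h.symm
  obtain ⟨B₀, hB₀⟩ := aux_diag hHerm.eigenvalues hsum
  apply aux_comm_of_B K₀ (U * B₀ * Uᵀ)
  have hT : (U * B₀ * Uᵀ)ᵀ = U * B₀ᵀ * Uᵀ := by
    rw [Matrix.transpose_mul, Matrix.transpose_mul, transpose_transpose, Matrix.mul_assoc]
  have hmul1 : (U * B₀ * Uᵀ)ᵀ * (U * B₀ * Uᵀ) = U * (B₀ᵀ * B₀) * Uᵀ := by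
    rw [hT]
    calc U * B₀ᵀ * Uᵀ * (U * B₀ * Uᵀ) = U * B₀ᵀ * (Uᵀ * U) * B₀ * Uᵀ := by
          simp only [Matrix.mul_assoc]
      _ = U * (B₀ᵀ * B₀) * Uᵀ := by rw [hU1]; simp only [Matrix.mul_one, Matrix.mul_assoc]
  have hmul2 : (U * B₀ * Uᵀ) * (U * B₀ * Uᵀ)ᵀ = U * (B₀ * B₀ᵀ) * Uᵀ := by
    rw [hT]
    calc U * B₀ * Uᵀ * (U * B₀ᵀ * Uᵀ) = U * B₀ * (Uᵀ * U) * B₀ᵀ * Uᵀ := by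
          simp only [Matrix.mul_assoc]
      _ = U * (B₀ * B₀ᵀ) * Uᵀ := by rw [hU1]; simp only [Matrix.mul_one, Matrix.mul_assoc]
  rw [hmul1, hmul2, ← Matrix.sub_mul, ← Matrix.mul_sub, ← Matrix.smul_mul, ← Matrix.mul_smul,
    hB₀, ← hspec]
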